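/- For x, y in the open unit ball 𝔹ⁿ, with φ_x(y) = ((|x|²−1)y + (|y|² − 2⟨x,y⟩ + 1)x)/(|x|²|y|² − 2⟨x,y⟩ + 1), one has the identity |φ_x(y)|² = |x−y|² / ((1−|x|²)(1−|y|²) + |x−y|²). -/

import Mathlib

open RealInnerProductSpace

/-- The involutive Möbius transformation `φ_x` of the unit ball in `ℝⁿ`. -/
noncomputable def mobiusPhi {n : ℕ} (x y : EuclideanSpace ℝ (Fin n)) :
    EuclideanSpace ℝ (Fin n) :=
  (‖x‖ ^ 2 * ‖y‖ ^ 2 - 2 * ⟪x, y⟫ + 1)⁻¹ •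
    ((‖x‖ ^ 2 - 1) • y + (‖y‖ ^ 2 - 2 * ⟪x, y⟫ + 1) • x)

theorem stmt4 (n : ℕ) (x y : EuclideanSpace ℝ (Fin n)) (hx : ‖x‖ < 1) (hy : ‖y‖ < 1) :
    ‖mobiusPhi x y‖ ^ 2 =
      ‖x - y‖ ^ 2 / ((1 - ‖x‖ ^ 2) * (1 - ‖y‖ ^ 2) + ‖x - y‖ ^ 2) := by
  set a := ‖x‖ ^ 2 with ha
  set b := ‖y‖ ^ 2 with hb
  set t := ⟪x, y⟫ with ht
  have hsub : ‖x - y‖ ^ 2 = a - 2 * t + b := by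
    rw [ha, hb, ht, @norm_sub_sq_real]
  have hD : a * b - 2 * t + 1 = (1 - a) * (1 - b) + ‖x - y‖ ^ 2 := by
    rw [hsub]; ring
  have ha0 : (0:ℝ) ≤ a := by positivity
  have hb0 : (0:ℝ) ≤ b := by positivity
  have ha1 : a < 1 := by
    rw [ha]; nlinarith [norm_nonneg x]
  have hb1 : b < 1 := by
    rw [hb]; nlinarith [norm_nonneg y]
  have hDpos : 0 < a * b - 2 * t + 1 := by
    rw [hD]
    have := sq_nonneg ‖x - y‖
    nlinarith
  have hinner : ‖(a - 1) • y + (b - 2 * t + 1) • x‖ ^ 2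
      = (a - 1) ^ 2 * b + 2 * (a - 1) * (b - 2 * t + 1) * t + (b - 2 * t + 1) ^ 2 * a := by
    rw [← real_inner_self_eq_norm_sq]
    simp only [inner_add_left, inner_add_right, real_inner_smul_left, real_inner_smul_right,
      real_inner_self_eq_norm_sq, real_inner_comm y x, norm_smul, mul_pow,
      Real.norm_eq_abs, sq_abs]
    have hc : ⟪y, x⟫ = t := by rw [real_inner_comm, ← ht]
    rw [hc]; ring
  have hkey : (a - 1) ^ 2 * b + 2 * (a - 1) * (b - 2 * t + 1) * t + (b - 2 * t + 1) ^ 2 * a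
      = (a - 2 * t + b) * (a * b - 2 * t + 1) := by ring
  rw [mobiusPhi, norm_smul, mul_pow, hinner, hkey, ← ha, ← hb, ← ht, ← hD, hsub,
    Real.norm_eq_abs, sq_abs]
  field_simp
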